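/- Let X be a locally compact, separable, completely metrizable space, let P be a closed set (in the closed convergence topology) of complete, continuous, locally strict binary relations on X, and let {Σ_n} be a nested exhaustive sequence of finite experiments (Σ_n ⊂ Σ_{n+1}, each Σ_n a set of n unordered pairs of alternatives, the union of all alternatives used is dense in X, and every pair of distinct such alternatives appears as a choice problem in some Σ_n). Let c be a choice function selecting one element from each unordered pair. If for every n there is a preference ⪰_n ∈ P rationalizing the observed choices on Σ_n (i.e., for every {x,y} ∈ Σ_n, c({x,y}) ⪰_n x and c({x,y}) ⪰_n y), then there exists a unique ⪰* ∈ P such that ⪰_n → ⪰* in the closed convergence topology, and any other sequence of rationalizations in P also converges to ⪰*. -/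

import Mathlib

open Filter Topology MeasureTheory

/-- A binary relation on `X`, viewed as a set of pairs, is complete. -/
def CompleteRel {X : Type*} (R : Set (X × X)) : Prop :=
  ∀ x y : X, (x, y) ∈ R ∨ (y, x) ∈ R

/-- The strict part of a relation. -/
def StrictPref {X : Type*} (R : Set (X × X)) (x y : X) : Prop :=
  (x, y) ∈ R ∧ (y, x) ∉ R

/-- A relation is locally strict. -/
def LocallyStrict {X : Type*} [TopologicalSpace X] (R : Set (X × X)) : Prop :=
  ∀ x y : X, (x, y) ∈ R → ∀ V ∈ 𝓝 ((x, y) : X × X), ∃ p ∈ V, StrictPref R p.1 p.2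

/-- Convergence of a sequence of relations in the closed convergence topology. -/
def ClosedConv {X : Type*} [TopologicalSpace X] (R : ℕ → Set (X × X)) (S : Set (X × X)) : Prop :=
  (∀ p ∈ S, ∃ u : ℕ → X × X, Tendsto u atTop (𝓝 p) ∧ ∀ n, u n ∈ R n) ∧
  (∀ φ : ℕ → ℕ, StrictMono φ → ∀ u : ℕ → X × X, (∀ k, u k ∈ R (φ k)) →
    ∀ p : X × X, Tendsto u atTop (𝓝 p) → p ∈ S)

/-- Grodal transitivity: `x ⪰ y ≻ z ⪰ w` implies `x ⪰ w`. -/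
def GrodalTrans {X : Type*} (R : Set (X × X)) : Prop :=
  ∀ x y z w : X, (x, y) ∈ R → StrictPref R y z → (z, w) ∈ R → (x, w) ∈ R

/-- Strict monotonicity with respect to a dominance relation `D`. -/
def StrictMonoWrt {X : Type*} (R : Set (X × X)) (D : Set (X × X)) : Prop :=
  ∀ x y : X, (x, y) ∈ D → StrictPref R x y

/-- The relation `R` rationalizes the observed choices on the experiment consisting of
the first `n` binary choice problems `B 0, …, B (n-1)`. -/
def RationalizesOn {X : Type*} (R : Set (X × X)) (c : Sym2 X → X) (B : ℕ → Sym2 X)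
    (n : ℕ) : Prop :=
  ∀ k < n, ∀ x ∈ B k, (c (B k), x) ∈ R

/-- The nested sequence of experiments determined by `B` is exhaustive. -/
def Exhaustive {X : Type*} [TopologicalSpace X] (B : ℕ → Sym2 X) : Prop :=
  Dense {x : X | ∃ k, x ∈ B k} ∧
  ∀ x y : X, x ≠ y → (∃ k, x ∈ B k) → (∃ k, y ∈ B k) → ∃ k, B k = Sym2.mk x y

lemma selSeq {Y : Type*} [PseudoMetricSpace Y] (C : ℕ → Set Y) (p : Y)
    (hne : ∀ n, (C n).Nonempty)
    (h : ∀ ε > (0:ℝ), ∀ᶠ n in atTop, (C n ∩ Metric.ball p ε).Nonempty) :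
    ∃ u : ℕ → Y, Tendsto u atTop (𝓝 p) ∧ ∀ n, u n ∈ C n := by
  classical
  have h' : ∀ j : ℕ, ∃ N, ∀ n ≥ N, (C n ∩ Metric.ball p (1/(j+1))).Nonempty := by
    intro j
    exact (eventually_atTop.mp (h (1/(j+1)) (by positivity)))
  choose N hN using h'
  set M : ℕ → ℕ := fun j => (Finset.range (j+1)).sup N with hM
  have hNM : ∀ j, N j ≤ M j := fun j =>
    Finset.le_sup (Finset.mem_range.mpr (Nat.lt_succ_self j))
  have hMmono : Monotone M := fun a b hab =>
    Finset.sup_mono (Finset.range_subset_range.mpr (by omega))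
  set u : ℕ → Y := fun n =>
    if h0 : M 0 ≤ n then
      (hN (Nat.findGreatest (fun j => M j ≤ n) n) n
        (le_trans (hNM _) (Nat.findGreatest_spec (P := fun j => M j ≤ n) (m := 0) (Nat.zero_le n) h0))).choose
    else (hne n).choose with hu
  refine ⟨u, ?_, ?_⟩
  · rw [Metric.tendsto_atTop]
    intro ε hε
    obtain ⟨j₀, hj₀⟩ := exists_nat_one_div_lt hε
    refine ⟨max (M j₀) j₀, fun n hn => ?_⟩
    have h0 : M 0 ≤ n := le_trans (hMmono (Nat.zero_le j₀)) (le_trans (le_max_left _ _) hn)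
    have hjn : j₀ ≤ Nat.findGreatest (fun j => M j ≤ n) n :=
      Nat.le_findGreatest (le_trans (le_max_right _ _) hn)
        (le_trans (le_max_left _ _) hn)
    have hball := (hN (Nat.findGreatest (fun j => M j ≤ n) n) n
        (le_trans (hNM _) (Nat.findGreatest_spec (P := fun j => M j ≤ n) (m := 0) (Nat.zero_le n) h0))).choose_spec.2
    have : u n = (hN (Nat.findGreatest (fun j => M j ≤ n) n) n
        (le_trans (hNM _) (Nat.findGreatest_spec (P := fun j => M j ≤ n) (m := 0) (Nat.zero_le n) h0))).choose := by
      simp only [hu, dif_pos h0]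
    rw [this]
    have hb : dist _ p < 1/((Nat.findGreatest (fun j => M j ≤ n) n : ℝ)+1) :=
      Metric.mem_ball.mp hball
    refine lt_of_lt_of_le (lt_of_lt_of_le hb ?_) (le_of_lt hj₀)
    apply one_div_le_one_div_of_le (by positivity)
    exact_mod_cast Nat.succ_le_succ hjn
  · intro n
    by_cases h0 : M 0 ≤ n
    · have := (hN (Nat.findGreatest (fun j => M j ≤ n) n) n
        (le_trans (hNM _) (Nat.findGreatest_spec (P := fun j => M j ≤ n) (m := 0) (Nat.zero_le n) h0))).choose_spec.1
      simpa only [hu, dif_pos h0] using this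
    · simpa only [hu, dif_neg h0] using (hne n).choose_spec

lemma extraction {Y : Type*} [MetricSpace Y] [SecondCountableTopology Y] [Nonempty Y]
    (C : ℕ → Set Y) (hne : ∀ n, (C n).Nonempty) :
    ∃ (σ : ℕ → ℕ) (S : Set Y), StrictMono σ ∧ IsClosed S ∧
      (∀ p ∈ S, ∃ u : ℕ → Y, Tendsto u atTop (𝓝 p) ∧ ∀ n, u n ∈ C (σ n)) ∧
      (∀ φ : ℕ → ℕ, StrictMono φ → ∀ u : ℕ → Y, (∀ k, u k ∈ C (σ (φ k))) →
        ∀ p, Tendsto u atTop (𝓝 p) → p ∈ S) := by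
  classical
  obtain ⟨s, hsc, hsd⟩ := TopologicalSpace.exists_countable_dense Y
  obtain ⟨q, hq⟩ := Set.Countable.exists_eq_range hsc hsd.nonempty
  have hqd : DenseRange q := by rw [DenseRange, ← hq]; exact hsd
  set U : ℕ × ℕ → Set Y := fun i => Metric.ball (q i.1) (1/(i.2+1)) with hU
  have hUopen : ∀ i, IsOpen (U i) := fun i => Metric.isOpen_ball
  have hbasis : ∀ (p : Y), ∀ ε > (0:ℝ), ∃ i, p ∈ U i ∧ U i ⊆ Metric.ball p ε := by
    intro p ε hε
    obtain ⟨j, hj⟩ := exists_nat_one_div_lt (half_pos hε)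
    obtain ⟨m, hm⟩ := hqd.exists_dist_lt p (by positivity : (0:ℝ) < 1/(j+1))
    refine ⟨(m, j), Metric.mem_ball.mpr hm, fun y hy => ?_⟩
    have h1 : dist y (q m) < 1/(j+1) := Metric.mem_ball.mp hy
    have : dist y p < ε := by
      calc dist y p ≤ dist y (q m) + dist p (q m) := dist_triangle_right y p (q m)
        _ < 1/(j+1) + 1/(j+1) := by linarith
        _ < ε/2 + ε/2 := by linarith
        _ = ε := by ring
    exact Metric.mem_ball.mpr this
  set f : ℕ → (ℕ × ℕ) → Bool := fun k i => decide (C k ∩ U i).Nonempty with hf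
  obtain ⟨g, σ, hσ, hconv⟩ := CompactSpace.tendsto_subseq f
  have hstab : ∀ i, ∀ᶠ k in atTop, f (σ k) i = g i := by
    intro i
    have h1 : Tendsto (fun k => f (σ k) i) atTop (𝓝 (g i)) := (tendsto_pi_nhds.mp hconv) i
    exact h1.eventually (eventually_of_mem ((isOpen_discrete {g i}).mem_nhds rfl)
      (fun y hy => hy))
  set S : Set Y := {p | ∀ i, p ∈ U i → g i = true} with hS
  have hScl : IsClosed S := by
    rw [← isOpen_compl_iff]
    rw [isOpen_iff_mem_nhds]
    intro p hp
    simp only [hS, Set.mem_compl_iff, Set.mem_setOf_eq, not_forall] at hp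
    obtain ⟨i, hpi, hgi⟩ := hp
    refine mem_of_superset ((hUopen i).mem_nhds hpi) (fun y hy hyS => hgi (hyS i hy))
  refine ⟨σ, S, hσ, hScl, ?_, ?_⟩
  · intro p hp
    apply selSeq (fun n => C (σ n)) p (fun n => hne (σ n))
    intro ε hε
    obtain ⟨i, hpi, hsub⟩ := hbasis p ε hε
    have hgi : g i = true := hp i hpi
    filter_upwards [hstab i] with k hk
    have : (C (σ k) ∩ U i).Nonempty := by
      have : f (σ k) i = true := hk.trans hgi
      exact of_decide_eq_true this
    obtain ⟨y, hy1, hy2⟩ := this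
    exact ⟨y, hy1, hsub hy2⟩
  · intro φ hφ u hu p hp i hpi
    have h1 : ∀ᶠ k in atTop, u k ∈ U i :=
      hp.eventually (eventually_of_mem ((hUopen i).mem_nhds hpi) (fun y hy => hy))
    obtain ⟨K1, hK1⟩ := eventually_atTop.mp h1
    obtain ⟨K2, hK2⟩ := eventually_atTop.mp (hstab i)
    set k := max K1 K2 with hk
    have h2 : f (σ (φ k)) i = g i := hK2 _ (le_trans (le_max_right _ _) (hφ.le_apply))
    have h3 : f (σ (φ k)) i = true := decide_eq_true ⟨u k, hu k, hK1 k (le_max_left _ _)⟩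
    rw [← h2, h3]

theorem stmt3 {X : Type*} [TopologicalSpace X] [PolishSpace X] [LocallyCompactSpace X]
    (P : Set (Set (X × X)))
    (hP : ∀ R ∈ P, CompleteRel R ∧ IsClosed R ∧ LocallyStrict R)
    (hPclosed : ∀ (R : ℕ → Set (X × X)), (∀ n, R n ∈ P) →
      ∀ S : Set (X × X), IsClosed S → ClosedConv R S → S ∈ P)
    (B : ℕ → Sym2 X) (hBinj : Function.Injective B) (hBex : Exhaustive B)
    (c : Sym2 X → X) (hc : ∀ z : Sym2 X, c z ∈ z)
    (R : ℕ → Set (X × X))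
    (hR : ∀ n, R n ∈ P ∧ RationalizesOn (R n) c B n) :
    ∃ S ∈ P, ClosedConv R S ∧
      (∀ R' : ℕ → Set (X × X),
        (∀ n, R' n ∈ P ∧ RationalizesOn (R' n) c B n) → ClosedConv R' S) ∧
      (∀ S' ∈ P, ClosedConv R S' → S' = S) := by
  classical
  obtain hX | hX := isEmpty_or_nonempty X
  · refine ⟨R 0, (hR 0).1, ⟨?_, ?_⟩, fun R' hR' => ⟨?_, ?_⟩, ?_⟩
    · intro p _; exact (hX.false p.1).elim
    · intro φ _ u _ p _; exact (hX.false p.1).elim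
    · intro p _; exact (hX.false p.1).elim
    · intro φ _ u _ p _; exact (hX.false p.1).elim
    · intro S' _ _; ext p; exact (hX.false p.1).elim
  · letI := TopologicalSpace.upgradeIsCompletelyMetrizable X
    obtain ⟨x₀⟩ := hX
    set W : Set (X × X) := {p | ∃ m, B m = Sym2.mk p.1 p.2 ∧ c (B m) = p.1} with hWdef
    -- every element of W is eventually in every rationalizing sequence
    have hWR : ∀ (R' : ℕ → Set (X × X)), (∀ n, RationalizesOn (R' n) c B n) →
        ∀ p ∈ W, ∃ m, ∀ n, m < n → p ∈ R' n := by
      rintro R' hR' ⟨x, y⟩ ⟨m, hm, hcm⟩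
      refine ⟨m, fun n hn => ?_⟩
      have hmem : y ∈ B m := by rw [hm]; exact Sym2.mem_mk_right x y
      have := hR' n m hn y hmem
      rwa [hcm] at this
    -- every relation in a rationalizing sequence is nonempty
    have hne : ∀ (R' : ℕ → Set (X × X)), (∀ n, R' n ∈ P) → ∀ n, (R' n).Nonempty := by
      intro R' hR' n
      rcases (hP _ (hR' n)).1 x₀ x₀ with h | h <;> exact ⟨(x₀, x₀), h⟩
    -- the key identification lemma
    have hL2 : ∀ (R' : ℕ → Set (X × X)),
        (∀ n, R' n ∈ P ∧ RationalizesOn (R' n) c B n) →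
        ∀ (ψ : ℕ → ℕ), StrictMono ψ → ∀ (S : Set (X × X)), IsClosed S →
        ClosedConv (fun k => R' (ψ k)) S → S = closure W := by
      intro R' hR' ψ hψ S hScl hcc
      have hSP : S ∈ P := hPclosed _ (fun n => (hR' (ψ n)).1) S hScl hcc
      obtain ⟨hScomp, hScl', hSls⟩ := hP S hSP
      have tail : ∀ p : X × X, (∃ m, ∀ n, m < n → p ∈ R' n) → p ∈ S := by
        rintro p ⟨m, hm⟩
        exact hcc.2 (fun l => l + (m+1)) (fun a b hab => Nat.add_lt_add_right hab (m+1))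
          (fun _ => p)
          (fun k => hm _ (show m < ψ (k + (m+1)) by
            have h5 : k + (m+1) ≤ ψ (k + (m+1)) := hψ.le_apply
            omega))
          p tendsto_const_nhds
      have hWS : W ⊆ S := fun p hp => tail p (hWR R' (fun n => (hR' n).2) p hp)
      refine subset_antisymm ?_ (closure_minimal hWS hScl)
      rintro ⟨x, y⟩ hp
      rw [mem_closure_iff]
      intro O hO hpO
      obtain ⟨qq, hqO, hqs⟩ := hSls x y hp O (hO.mem_nhds hpO)
      obtain ⟨a, b⟩ := qq
      obtain ⟨u, v, hu, hv, hbu, hav, huv⟩ :=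
        isOpen_prod_iff.mp hScl'.isOpen_compl b a hqs.2
      obtain ⟨o₁, o₂, ho₁, ho₂, hao, hbo, hoO⟩ := isOpen_prod_iff.mp hO a b hqO
      have hUo : IsOpen (v ∩ o₁) := hv.inter ho₁
      have hVo : IsOpen (u ∩ o₂) := hu.inter ho₂
      obtain ⟨d, hdD, hdU⟩ := hBex.1.exists_mem_open hUo ⟨a, hav, hao⟩
      obtain ⟨e, heD, heV⟩ := hBex.1.exists_mem_open hVo ⟨b, hbu, hbo⟩
      have hde : d ≠ e := by
        rintro rfl
        have h1 : (d, d) ∉ S := huv ⟨heV.1, hdU.1⟩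
        rcases hScomp d d with h | h <;> exact h1 h
      obtain ⟨m, hm⟩ := hBex.2 d e hde hdD heD
      have hcm : c (B m) = d ∨ c (B m) = e := by
        have h2 := hc (B m)
        nth_rewrite 1 [hm] at h2
        exact Sym2.mem_iff.mp h2
      rcases hcm with h | h
      · exact ⟨(d, e), hoO ⟨hdU.2, heV.2⟩, ⟨m, hm, h⟩⟩
      · exfalso
        have hedW : (e, d) ∈ W := ⟨m, by rw [hm, Sym2.eq_swap], h⟩
        have : (e, d) ∈ S := tail _ (hWR R' (fun n => (hR' n).2) _ hedW)
        exact huv ⟨heV.1, hdU.1⟩ this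
    -- the main convergence claim
    have hmain : ∀ (R' : ℕ → Set (X × X)),
        (∀ n, R' n ∈ P ∧ RationalizesOn (R' n) c B n) → ClosedConv R' (closure W) := by
      intro R' hR'
      constructor
      · intro p hp
        apply selSeq R' p (hne R' (fun n => (hR' n).1))
        intro ε hε
        obtain ⟨w, hwW, hwd⟩ := Metric.mem_closure_iff.mp hp ε hε
        obtain ⟨m, hm⟩ := hWR R' (fun n => (hR' n).2) w hwW
        filter_upwards [eventually_gt_atTop m] with n hn
        exact ⟨w, hm n hn, Metric.mem_ball.mpr (by rwa [dist_comm])⟩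
      · intro φ hφ u hu p hp
        have : Nonempty (X × X) := ⟨(x₀, x₀)⟩
        obtain ⟨σ, S, hσ, hScl, hlow, hupp⟩ :=
          extraction (fun k => R' (φ k)) (fun k => hne R' (fun n => (hR' n).1) (φ k))
        have hcc : ClosedConv (fun k => R' (φ (σ k))) S := ⟨hlow, hupp⟩
        have hSW : S = closure W := hL2 R' hR' (φ ∘ σ) (hφ.comp hσ) S hScl hcc
        rw [← hSW]
        exact hupp id strictMono_id (u ∘ σ) (fun k => hu (σ k)) p
          (hp.comp hσ.tendsto_atTop)
    have hccR : ClosedConv R (closure W) := hmain R hR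
    have hPmem : closure W ∈ P := hPclosed R (fun n => (hR n).1) _ isClosed_closure hccR
    refine ⟨closure W, hPmem, hccR, hmain, ?_⟩
    intro S' _ hcc'
    apply subset_antisymm
    · intro p hp
      obtain ⟨u, hut, hu⟩ := hcc'.1 p hp
      exact hccR.2 id strictMono_id u hu p hut
    · intro p hp
      obtain ⟨u, hut, hu⟩ := hccR.1 p hp
      exact hcc'.2 id strictMono_id u hu p hut
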